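/- Let $\mu \le 0$ be a constant, and on $\mathbb{R}^n$ define $\alpha = \frac{\sqrt{(1+\mu|x|^2)|y|^2 - \mu\langle x,y\rangle^2}}{1+\mu|x|^2}$ and $\beta = \frac{\lambda\langle x,y\rangle + (1+\mu|x|^2)\langle a,y\rangle - \mu\langle a,x\rangle\langle x,y\rangle}{(1+\mu|x|^2)^{3/2}}$ for a constant $\lambda \in \mathbb{R}$ and constant vector $a \in \mathbb{R}^n$ with $\lambda^2 + \mu|a|^2 = 0$. Then the length $b$ of $\beta$ with respect to $\alpha$ satisfies $b^2 = \frac{\lambda^2|x|^2 + 2\lambda\langle a,x\rangle + (1+\mu|x|^2)|a|^2 - \mu\langle a,x\rangle^2}{1+\mu|x|^2}$, and the conformal factor $c(x)$ of $\beta$ (defined by $r_{00} = c\,\alpha^2$ with $r_{ij}$ the symmetrized covariant derivative of $\beta$ with respect to $\alpha$) satisfies $c^2 = -\mu b^2$. -/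

import Mathlib

open Matrix

noncomputable section

/-- `|x|²`. -/
def nsq {n : ℕ} (x : Fin n → ℝ) : ℝ := ∑ i, x i ^ 2

/-- `⟨x, y⟩`. -/
def ipr {n : ℕ} (x y : Fin n → ℝ) : ℝ := ∑ i, x i * y i

/-- The matrix of the metric `α² = ((1+μ|x|²)|y|² - μ⟨x,y⟩²)/(1+μ|x|²)²`
of constant sectional curvature `μ` in the projective model. -/
def aMat {n : ℕ} (μ : ℝ) (x : Fin n → ℝ) : Matrix (Fin n) (Fin n) ℝ :=
  Matrix.of fun i j =>
    ((1 + μ * nsq x) * (if i = j then (1 : ℝ) else 0) - μ * x i * x j) /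
      (1 + μ * nsq x) ^ 2

/-- Coefficients `b_i(x)` of the 1-form
`β = (λ⟨x,y⟩ + (1+μ|x|²)⟨a,y⟩ - μ⟨a,x⟩⟨x,y⟩)/(1+μ|x|²)^{3/2}`. -/
def bCov {n : ℕ} (μ lam : ℝ) (a : Fin n → ℝ) (x : Fin n → ℝ) (i : Fin n) : ℝ :=
  (lam * x i + (1 + μ * nsq x) * a i - μ * ipr a x * x i) /
    ((1 + μ * nsq x) * Real.sqrt (1 + μ * nsq x))

/-- Partial derivative `∂f/∂xⁱ`. -/
def pd {n : ℕ} (i : Fin n) (f : (Fin n → ℝ) → ℝ) (x : Fin n → ℝ) : ℝ :=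
  fderiv ℝ f x (Pi.single i 1)

/-- Christoffel symbols `Γ^k_{ij}` of the Levi-Civita connection of `aMat μ`. -/
def christoffel {n : ℕ} (μ : ℝ) (x : Fin n → ℝ) (k i j : Fin n) : ℝ :=
  (1 / 2) * ∑ l, (aMat μ x)⁻¹ k l *
    (pd i (fun z => aMat μ z j l) x + pd j (fun z => aMat μ z i l) x -
      pd l (fun z => aMat μ z i j) x)

/-- The covariant derivative `b_{i|j}` of `β` with respect to `α`. -/
def covDer {n : ℕ} (μ lam : ℝ) (a : Fin n → ℝ) (x : Fin n → ℝ) (i j : Fin n) : ℝ :=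
  pd j (fun z => bCov μ lam a z i) x - ∑ k, christoffel μ x k i j * bCov μ lam a x k

/-- `r_{ij} = ½(b_{i|j} + b_{j|i})`. -/
def rTensor {n : ℕ} (μ lam : ℝ) (a : Fin n → ℝ) (x : Fin n → ℝ) (i j : Fin n) : ℝ :=
  (covDer μ lam a x i j + covDer μ lam a x j i) / 2

/-- `b² = a^{ij} b_i b_j`. -/
def bNormSq {n : ℕ} (μ lam : ℝ) (a : Fin n → ℝ) (x : Fin n → ℝ) : ℝ :=
  ∑ i, ∑ j, (aMat μ x)⁻¹ i j * bCov μ lam a x i * bCov μ lam a x j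

lemma pd_eq {n : ℕ} {i : Fin n} {f : (Fin n → ℝ) → ℝ} {x : Fin n → ℝ}
    {L : (Fin n → ℝ) →L[ℝ] ℝ} (h : HasFDerivAt f L x) :
    pd i f x = L (Pi.single i 1) := by simp only [pd]; rw [h.fderiv]

lemma hasF_coord {n : ℕ} (j : Fin n) (x : Fin n → ℝ) :
    HasFDerivAt (fun z : Fin n → ℝ => z j)
      (ContinuousLinearMap.proj j : (Fin n → ℝ) →L[ℝ] ℝ) x :=
  (ContinuousLinearMap.proj (R := ℝ) (φ := fun _ : Fin n => ℝ) j).hasFDerivAt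

lemma hasF_nsq {n : ℕ} (x : Fin n → ℝ) :
    HasFDerivAt (fun z : Fin n → ℝ => nsq z)
      (∑ j, ((2 : ℝ) * x j) • (ContinuousLinearMap.proj j : (Fin n → ℝ) →L[ℝ] ℝ)) x := by
  have h : ∀ j : Fin n, HasFDerivAt (fun z : Fin n → ℝ => z j ^ 2)
      (((2 : ℝ) * x j) • (ContinuousLinearMap.proj j : (Fin n → ℝ) →L[ℝ] ℝ)) x := by
    intro j
    simpa [pow_two, two_mul, add_smul] using (hasF_coord j x).fun_mul (hasF_coord j x)
  simpa [nsq] using HasFDerivAt.fun_sum (u := Finset.univ) (fun j _ => h j)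

lemma hasF_ipr {n : ℕ} (a : Fin n → ℝ) (x : Fin n → ℝ) :
    HasFDerivAt (fun z : Fin n → ℝ => ipr a z)
      (∑ j, (a j) • (ContinuousLinearMap.proj j : (Fin n → ℝ) →L[ℝ] ℝ)) x := by
  have h : ∀ j : Fin n, HasFDerivAt (fun z : Fin n → ℝ => a j * z j)
      ((a j) • (ContinuousLinearMap.proj j : (Fin n → ℝ) →L[ℝ] ℝ)) x :=
    fun j => (hasF_coord j x).const_mul (a j)
  simpa [ipr] using HasFDerivAt.fun_sum (u := Finset.univ) (fun j _ => h j)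

lemma hasF_s {n : ℕ} (μ : ℝ) (x : Fin n → ℝ) :
    HasFDerivAt (fun z : Fin n → ℝ => 1 + μ * nsq z)
      (∑ j, ((2 : ℝ) * μ * x j) • (ContinuousLinearMap.proj j : (Fin n → ℝ) →L[ℝ] ℝ)) x := by
  have := ((hasF_nsq x).const_mul μ).const_add 1
  refine this.congr_fderiv ?_
  ext v
  simp only [ContinuousLinearMap.smul_apply, ContinuousLinearMap.sum_apply,
    ContinuousLinearMap.proj_apply, smul_eq_mul, Finset.mul_sum]
  exact Finset.sum_congr rfl fun j _ => by ring

lemma hasF_div {n : ℕ} {c d : (Fin n → ℝ) → ℝ} {c' d' : (Fin n → ℝ) →L[ℝ] ℝ} {x : Fin n → ℝ}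
    (hc : HasFDerivAt c c' x) (hd : HasFDerivAt d d' x) (hx : d x ≠ 0) :
    HasFDerivAt (fun y => c y / d y)
      ((d x)⁻¹ • c' + (-(c x) * (d x ^ 2)⁻¹) • d') x := by
  have hinv : HasFDerivAt (fun y => (d y)⁻¹) (-((d x ^ 2)⁻¹ • d')) x := by
    have h1 : HasDerivAt (fun y : ℝ => y⁻¹) (-(d x ^ 2)⁻¹) (d x) := hasDerivAt_inv hx
    simpa [Function.comp_def, neg_smul] using h1.comp_hasFDerivAt x hd
  have h2 := hc.fun_mul hinv
  have h3 : (fun y => c y / d y) = fun y => c y * (d y)⁻¹ := by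
    funext y; rw [div_eq_mul_inv]
  rw [h3]
  refine h2.congr_fderiv ?_
  ext v
  simp only [ContinuousLinearMap.add_apply, ContinuousLinearMap.smul_apply,
    ContinuousLinearMap.neg_apply, smul_eq_mul]
  ring

set_option maxHeartbeats 1000000 in
lemma pd_aMat {n : ℕ} (μ : ℝ) (x : Fin n → ℝ) (hs : (1 + μ * nsq x) ≠ 0) (i j l : Fin n) :
    pd i (fun z => aMat μ z j l) x =
      ((2*μ*x i * (if j = l then (1:ℝ) else 0)
          - μ * ((if j = i then (1:ℝ) else 0) * x l + x j * (if l = i then (1:ℝ) else 0)))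
          * (1 + μ * nsq x)
        - ((1 + μ * nsq x) * (if j = l then (1:ℝ) else 0) - μ * x j * x l) * (4*μ*x i))
        / (1 + μ * nsq x)^3 := by
  have hnum : HasFDerivAt (𝕜 := ℝ) (fun z : Fin n → ℝ =>
      (1 + μ * nsq z) * (if j = l then (1:ℝ) else 0) - μ * z j * z l) _ x :=
    ((hasF_s μ x).mul_const _).sub (((hasF_coord j x).const_mul μ).mul (hasF_coord l x))
  have hden : HasFDerivAt (𝕜 := ℝ) (fun z : Fin n → ℝ => (1 + μ * nsq z)^2)
      ((1 + μ * nsq x) • (∑ j, ((2:ℝ)*μ*x j) • (ContinuousLinearMap.proj j : (Fin n → ℝ) →L[ℝ] ℝ))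
        + (1 + μ * nsq x) • (∑ j, ((2:ℝ)*μ*x j) • (ContinuousLinearMap.proj j : (Fin n → ℝ) →L[ℝ] ℝ))) x := by
    simpa [pow_two] using (hasF_s μ x).fun_mul (hasF_s μ x)
  have h := hasF_div hnum hden (pow_ne_zero 2 hs)
  refine (pd_eq (i := i) (f := fun z => aMat μ z j l) h).trans ?_
  simp only [ContinuousLinearMap.add_apply, ContinuousLinearMap.sub_apply,
    ContinuousLinearMap.smul_apply, ContinuousLinearMap.sum_apply,
    ContinuousLinearMap.proj_apply, ContinuousLinearMap.coe_smul', Pi.smul_apply,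
    smul_eq_mul, Pi.single_apply, Finset.sum_ite_eq', Finset.mem_univ, if_true]
  set D1 : ℝ := (if j = l then (1:ℝ) else 0) with hD1
  set D2 : ℝ := (if j = i then (1:ℝ) else 0) with hD2
  set D3 : ℝ := (if l = i then (1:ℝ) else 0) with hD3
  simp only [mul_ite, ite_mul, mul_one, mul_zero, zero_mul, Finset.sum_ite_eq', Finset.mem_univ, if_true]
  field_simp
  ring

def aInv {n : ℕ} (μ : ℝ) (x : Fin n → ℝ) : Matrix (Fin n) (Fin n) ℝ :=
  Matrix.of fun i j =>
    (1 + μ * nsq x) * ((if i = j then (1 : ℝ) else 0) + μ * x i * x j)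

lemma aInv_eq {n : ℕ} (μ : ℝ) (x : Fin n → ℝ) (hs : (1 + μ * nsq x) ≠ 0) :
    (aMat μ x)⁻¹ = aInv μ x := by
  apply Matrix.inv_eq_right_inv
  ext i j
  simp only [Matrix.mul_apply, aMat, aInv, Matrix.of_apply, Matrix.one_apply]
  have hpoint : ∀ k : Fin n,
      ((1 + μ * nsq x) * (if i = k then (1:ℝ) else 0) - μ * x i * x k) / (1 + μ * nsq x) ^ 2 *
        ((1 + μ * nsq x) * ((if k = j then (1:ℝ) else 0) + μ * x k * x j)) =
      ((if k = i then (1 + μ * nsq x) * ((if k = j then (1:ℝ) else 0) + μ * x k * x j) else 0)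
        - μ * x i * ((if k = j then x k else 0) + μ * x j * x k ^ 2)) / (1 + μ * nsq x) := by
    intro k
    by_cases h1 : i = k
    · subst h1
      by_cases h2 : i = j <;> simp [h2] <;> field_simp <;> ring
    · have h1' : ¬ k = i := fun h => h1 h.symm
      by_cases h2 : k = j
      · subst h2
        simp [h1, h1']
        field_simp
      · simp [h1, h1', h2]
        field_simp
  rw [Finset.sum_congr rfl (fun k _ => hpoint k), ← Finset.sum_div,
    Finset.sum_sub_distrib, Finset.sum_ite_eq' Finset.univ i
      (fun k => (1 + μ * nsq x) * ((if k = j then (1:ℝ) else 0) + μ * x k * x j))]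
  have h2 : ∑ k : Fin n, μ * x i * ((if k = j then x k else 0) + μ * x j * x k ^ 2)
      = μ * x i * (x j + μ * x j * nsq x) := by
    rw [← Finset.mul_sum]
    congr 1
    rw [Finset.sum_add_distrib, Finset.sum_ite_eq' Finset.univ j (fun k => x k)]
    simp only [Finset.mem_univ, if_true, nsq]
    rw [show μ * x j * ∑ i, x i ^ 2 = ∑ i, μ * x j * x i ^ 2 from Finset.mul_sum _ _ _]
  rw [h2]
  simp only [Finset.mem_univ, if_true]
  by_cases hij : i = j
  · subst hij
    simp only [if_pos rfl]
    field_simp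
    ring
  · simp only [if_neg hij]
    field_simp
    ring

set_option maxHeartbeats 1000000 in
lemma pd_bCov {n : ℕ} (μ lam : ℝ) (a x : Fin n → ℝ) (hs : 0 < 1 + μ * nsq x) (i j : Fin n) :
    pd j (fun z => bCov μ lam a z i) x =
      ((lam * (if i = j then (1:ℝ) else 0) + 2 * μ * x j * a i
          - μ * (a j * x i + ipr a x * (if i = j then (1:ℝ) else 0))) * (1 + μ * nsq x)
        - 3 * μ * x j * (lam * x i + (1 + μ * nsq x) * a i - μ * ipr a x * x i))
        * Real.sqrt (1 + μ * nsq x) / (1 + μ * nsq x) ^ 3 := by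
  have hsqrt : HasFDerivAt (𝕜 := ℝ) (fun z : Fin n → ℝ => Real.sqrt (1 + μ * nsq z))
      ((1 / (2 * Real.sqrt (1 + μ * nsq x))) •
        (∑ j, ((2 : ℝ) * μ * x j) • (ContinuousLinearMap.proj j : (Fin n → ℝ) →L[ℝ] ℝ))) x := by
    have h1 : HasDerivAt Real.sqrt (1 / (2 * Real.sqrt (1 + μ * nsq x))) (1 + μ * nsq x) :=
      Real.hasDerivAt_sqrt hs.ne'
    simpa [Function.comp_def] using h1.comp_hasFDerivAt x (hasF_s μ x)
  have hnum : HasFDerivAt (𝕜 := ℝ) (fun z : Fin n → ℝ =>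
      lam * z i + (1 + μ * nsq z) * a i - μ * ipr a z * z i) _ x :=
    (((hasF_coord i x).const_mul lam).add ((hasF_s μ x).mul_const (a i))).sub
      (((hasF_ipr a x).const_mul μ).mul (hasF_coord i x))
  have hden := (hasF_s μ x).fun_mul hsqrt
  have hg : (1 + μ * nsq x) * Real.sqrt (1 + μ * nsq x) ≠ 0 :=
    mul_ne_zero hs.ne' (Real.sqrt_ne_zero'.mpr hs)
  have h := hasF_div hnum hden hg
  refine (pd_eq (i := j) (f := fun z => bCov μ lam a z i) h).trans ?_
  simp only [ContinuousLinearMap.add_apply, ContinuousLinearMap.sub_apply,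
    ContinuousLinearMap.smul_apply, ContinuousLinearMap.sum_apply,
    ContinuousLinearMap.proj_apply, ContinuousLinearMap.coe_smul', Pi.smul_apply,
    smul_eq_mul, Pi.single_apply, Finset.sum_ite_eq', Finset.mem_univ, if_true]
  set D : ℝ := (if i = j then (1:ℝ) else 0) with hD
  simp only [mul_ite, ite_mul, mul_one, mul_zero, zero_mul, Finset.sum_ite_eq', Finset.mem_univ, if_true]
  set t := Real.sqrt (1 + μ * nsq x) with htdef
  have htt : 1 + μ * nsq x = t * t := (Real.mul_self_sqrt hs.le).symm
  have ht0 : t ≠ 0 := Real.sqrt_ne_zero'.mpr hs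
  rw [htt]
  field_simp
  ring
set_option maxHeartbeats 4000000 in
lemma christoffel_eq {n : ℕ} (μ : ℝ) (x : Fin n → ℝ) (hs : 0 < 1 + μ * nsq x)
    (k i j : Fin n) :
    christoffel μ x k i j =
      -μ * (x i * (if k = j then (1:ℝ) else 0) + x j * (if k = i then (1:ℝ) else 0))
        / (1 + μ * nsq x) := by
  have hsne : (1 + μ * nsq x) ≠ 0 := hs.ne'
  set s : ℝ := 1 + μ * nsq x with hsdef
  -- numerators from pd_aMat
  set N1 : Fin n → ℝ := fun l =>
    (2*μ*x i * (if j = l then (1:ℝ) else 0)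
      - μ * ((if j = i then (1:ℝ) else 0) * x l + x j * (if l = i then (1:ℝ) else 0))) * s
    - (s * (if j = l then (1:ℝ) else 0) - μ * x j * x l) * (4*μ*x i) with hN1
  set N2 : Fin n → ℝ := fun l =>
    (2*μ*x j * (if i = l then (1:ℝ) else 0)
      - μ * ((if i = j then (1:ℝ) else 0) * x l + x i * (if l = j then (1:ℝ) else 0))) * s
    - (s * (if i = l then (1:ℝ) else 0) - μ * x i * x l) * (4*μ*x j) with hN2
  set N3 : Fin n → ℝ := fun l =>
    (2*μ*x l * (if i = j then (1:ℝ) else 0)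
      - μ * ((if i = l then (1:ℝ) else 0) * x j + x i * (if j = l then (1:ℝ) else 0))) * s
    - (s * (if i = j then (1:ℝ) else 0) - μ * x i * x j) * (4*μ*x l) with hN3
  have hsum : ∑ l, x l * (N1 l + N2 l - N3 l) = -(4*μ*x i*x j*s)
      + (-(μ * (if j = i then (1:ℝ) else 0) * s) + μ * (if i = j then (1:ℝ) else 0) * s
          + 4*μ^2*x i*x j) * nsq x := by
    have hpt : ∀ l, x l * (N1 l + N2 l - N3 l) =
        (if j = l then (-(μ * x i * s)) * x l else 0)
        + (if i = l then (-(μ * x j * s)) * x l else 0)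
        + (if l = i then (-(μ * x j * s)) * x l else 0)
        + (if l = j then (-(μ * x i * s)) * x l else 0)
        + (-(μ * (if j = i then (1:ℝ) else 0) * s) + μ * (if i = j then (1:ℝ) else 0) * s
            + 4*μ^2*x i*x j) * x l ^ 2 := by
      intro l
      simp only [hN1, hN2, hN3]
      split_ifs <;> ring
    rw [Finset.sum_congr rfl (fun l _ => hpt l)]
    simp only [Finset.sum_add_distrib, Finset.sum_ite_eq, Finset.sum_ite_eq',
      Finset.mem_univ, if_true]
    have hq : ∑ l : Fin n, x l ^ 2 = nsq x := rfl
    rw [show (∑ l : Fin n, (-(μ * (if j = i then (1:ℝ) else 0) * s)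
        + μ * (if i = j then (1:ℝ) else 0) * s + 4*μ^2*x i*x j) * x l ^ 2)
      = (-(μ * (if j = i then (1:ℝ) else 0) * s) + μ * (if i = j then (1:ℝ) else 0) * s
        + 4*μ^2*x i*x j) * nsq x from by rw [← Finset.mul_sum, hq]]
    ring
  have hrw : ∀ l : Fin n,
      pd i (fun z => aMat μ z j l) x + pd j (fun z => aMat μ z i l) x
        - pd l (fun z => aMat μ z i j) x = (N1 l + N2 l - N3 l) / s ^ 3 := by
    intro l
    rw [pd_aMat μ x hsne i j l, pd_aMat μ x hsne j i l, pd_aMat μ x hsne l i j,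
      ← add_div, ← sub_div]
  have hpt2 : ∀ l : Fin n, (aMat μ x)⁻¹ k l *
      (pd i (fun z => aMat μ z j l) x + pd j (fun z => aMat μ z i l) x
        - pd l (fun z => aMat μ z i j) x)
      = (if k = l then (N1 l + N2 l - N3 l) / s ^ 2 else 0)
        + (μ * x k / s ^ 2) * (x l * (N1 l + N2 l - N3 l)) := by
    intro l
    rw [hrw l, aInv_eq μ x hsne]
    simp only [aInv, Matrix.of_apply]
    by_cases hkl : k = l
    · simp only [if_pos hkl]
      rw [hsdef]
      field_simp
    · simp only [if_neg hkl, zero_add, add_zero, zero_mul, mul_zero]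
      rw [hsdef]
      field_simp
  rw [christoffel, Finset.sum_congr rfl (fun l _ => hpt2 l), Finset.sum_add_distrib,
    Finset.sum_ite_eq Finset.univ k (fun l => (N1 l + N2 l - N3 l) / s ^ 2),
    ← Finset.mul_sum, hsum]
  simp only [Finset.mem_univ, if_true, hN1, hN2, hN3]
  by_cases h1 : i = j
  · subst h1
    by_cases h2 : k = i
    · subst h2
      simp only [if_pos rfl]
      rw [hsdef] at hsne ⊢
      field_simp
      ring
    · simp only [if_neg h2, if_neg (Ne.symm h2), if_pos rfl]
      rw [hsdef] at hsne ⊢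
      field_simp
      ring
  · by_cases h2 : k = i
    · subst h2
      simp only [if_neg h1, if_neg (Ne.symm h1), if_pos rfl]
      rw [hsdef] at hsne ⊢
      field_simp
      ring
    · by_cases h3 : k = j
      · subst h3
        simp only [if_neg h1, if_neg (Ne.symm h1), if_neg h2, if_neg (Ne.symm h2), if_pos rfl]
        rw [hsdef] at hsne ⊢
        field_simp
        ring
      · simp only [if_neg h1, if_neg (Ne.symm h1), if_neg h2, if_neg (Ne.symm h2),
          if_neg h3, if_neg (Ne.symm h3)]
        rw [hsdef] at hsne ⊢
        field_simp
        ring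
set_option maxHeartbeats 2000000 in
lemma covDer_eq {n : ℕ} (μ lam : ℝ) (a x : Fin n → ℝ) (hs : 0 < 1 + μ * nsq x) (i j : Fin n) :
    covDer μ lam a x i j
      = ((lam - μ * ipr a x) / Real.sqrt (1 + μ * nsq x)) * aMat μ x i j := by
  have hsne : (1 + μ * nsq x) ≠ 0 := hs.ne'
  have hgam : ∀ k, christoffel μ x k i j * bCov μ lam a x k
      = (if k = j then (-μ * x i / (1 + μ * nsq x)) * bCov μ lam a x k else 0)
        + (if k = i then (-μ * x j / (1 + μ * nsq x)) * bCov μ lam a x k else 0) := by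
    intro k
    rw [christoffel_eq μ x hs k i j]
    by_cases h1 : k = j
    · subst h1
      by_cases h2 : k = i
      · subst h2
        simp only [eq_self_iff_true, if_true]
        field_simp
        ring
      · simp only [eq_self_iff_true, if_true, if_neg h2]
        field_simp
        try ring
    · by_cases h2 : k = i
      · subst h2
        simp only [eq_self_iff_true, if_true, if_neg h1]
        field_simp
        try ring
      · simp only [if_neg h1, if_neg h2]
        ring
  rw [covDer, Finset.sum_congr rfl (fun k _ => hgam k), Finset.sum_add_distrib,
    Finset.sum_ite_eq' Finset.univ j (fun k => (-μ * x i / (1 + μ * nsq x)) * bCov μ lam a x k),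
    Finset.sum_ite_eq' Finset.univ i (fun k => (-μ * x j / (1 + μ * nsq x)) * bCov μ lam a x k),
    pd_bCov μ lam a x hs i j]
  simp only [Finset.mem_univ, if_true, bCov, aMat, Matrix.of_apply]
  set D : ℝ := (if i = j then (1:ℝ) else 0) with hD
  set t := Real.sqrt (1 + μ * nsq x) with htdef
  have ht0 : t ≠ 0 := Real.sqrt_ne_zero'.mpr hs
  have htt : 1 + μ * nsq x = t * t := (Real.mul_self_sqrt hs.le).symm
  rw [htt]
  field_simp
  ring

lemma aMat_symm {n : ℕ} (μ : ℝ) (x : Fin n → ℝ) (i j : Fin n) :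
    aMat μ x j i = aMat μ x i j := by
  simp only [aMat, Matrix.of_apply]
  by_cases h : i = j
  · rw [h]
  · rw [if_neg h, if_neg (Ne.symm h)]
    ring

lemma rTensor_eq {n : ℕ} (μ lam : ℝ) (a x : Fin n → ℝ) (hs : 0 < 1 + μ * nsq x) (i j : Fin n) :
    rTensor μ lam a x i j
      = ((lam - μ * ipr a x) / Real.sqrt (1 + μ * nsq x)) * aMat μ x i j := by
  rw [rTensor, covDer_eq μ lam a x hs i j, covDer_eq μ lam a x hs j i, aMat_symm]
  ring

lemma sum_quad {n : ℕ} (x a : Fin n → ℝ) (A B C : ℝ) :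
    ∑ i, (A * x i ^ 2 + B * (a i * x i) + C * a i ^ 2)
      = A * nsq x + B * ipr a x + C * nsq a := by
  simp only [nsq, ipr, Finset.sum_add_distrib, Finset.mul_sum]

set_option maxHeartbeats 2000000 in
lemma bNormSq_eq {n : ℕ} (μ lam : ℝ) (a x : Fin n → ℝ) (hs : 0 < 1 + μ * nsq x) :
    bNormSq μ lam a x =
      (lam ^ 2 * nsq x + 2 * lam * ipr a x + (1 + μ * nsq x) * nsq a
        - μ * ipr a x ^ 2) / (1 + μ * nsq x) := by
  have hsne : (1 + μ * nsq x) ≠ 0 := hs.ne'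
  set t := Real.sqrt (1 + μ * nsq x) with htdef
  have ht0 : t ≠ 0 := Real.sqrt_ne_zero'.mpr hs
  have htt : t * t = 1 + μ * nsq x := Real.mul_self_sqrt hs.le
  have hden : ((1 + μ * nsq x) * t) * ((1 + μ * nsq x) * t) = (1 + μ * nsq x) ^ 3 := by
    rw [show ((1 + μ * nsq x) * t) * ((1 + μ * nsq x) * t)
      = ((1 + μ * nsq x) * (1 + μ * nsq x)) * (t * t) from by ring, htt]
    ring
  have hpt : ∀ i j : Fin n, (aMat μ x)⁻¹ i j * bCov μ lam a x i * bCov μ lam a x j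
      = (if i = j then (1 + μ * nsq x) * (bCov μ lam a x i * bCov μ lam a x j) else 0)
        + ((1 + μ * nsq x) * μ)
            * ((x i * bCov μ lam a x i) * (x j * bCov μ lam a x j)) := by
    intro i j
    rw [aInv_eq μ x hsne]
    simp only [aInv, Matrix.of_apply]
    by_cases h : i = j <;> simp [h] <;> ring
  rw [bNormSq, Finset.sum_congr rfl (fun i _ => Finset.sum_congr rfl (fun j _ => hpt i j))]
  simp only [Finset.sum_add_distrib, Finset.sum_ite_eq, Finset.mem_univ, if_true]
  have hBpt : ∀ i, bCov μ lam a x i * bCov μ lam a x i =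
      ((lam ^ 2 + μ ^ 2 * ipr a x ^ 2 - 2 * lam * μ * ipr a x) * x i ^ 2
        + (2 * lam * (1 + μ * nsq x) - 2 * μ * ipr a x * (1 + μ * nsq x)) * (a i * x i)
        + (1 + μ * nsq x) ^ 2 * a i ^ 2) / (1 + μ * nsq x) ^ 3 := by
    intro i
    simp only [bCov]
    rw [div_mul_div_comm, hden]
    congr 1
    ring
  have hTpt : ∀ i, x i * bCov μ lam a x i =
      ((lam - μ * ipr a x) * x i ^ 2 + (1 + μ * nsq x) * (a i * x i) + 0 * a i ^ 2)
        / ((1 + μ * nsq x) * t) := by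
    intro i
    simp only [bCov]
    rw [mul_div_assoc']
    congr 1
    ring
  have hBsum : ∑ i, bCov μ lam a x i * bCov μ lam a x i =
      ((lam ^ 2 + μ ^ 2 * ipr a x ^ 2 - 2 * lam * μ * ipr a x) * nsq x
        + (2 * lam * (1 + μ * nsq x) - 2 * μ * ipr a x * (1 + μ * nsq x)) * ipr a x
        + (1 + μ * nsq x) ^ 2 * nsq a) / (1 + μ * nsq x) ^ 3 := by
    rw [Finset.sum_congr rfl (fun i _ => hBpt i), ← Finset.sum_div, sum_quad]
  have hTsum : ∑ i, x i * bCov μ lam a x i =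
      ((lam - μ * ipr a x) * nsq x + (1 + μ * nsq x) * ipr a x + 0 * nsq a)
        / ((1 + μ * nsq x) * t) := by
    rw [Finset.sum_congr rfl (fun i _ => hTpt i), ← Finset.sum_div, sum_quad]
  have hdbl : ∑ i, ∑ j, ((1 + μ * nsq x) * μ)
        * ((x i * bCov μ lam a x i) * (x j * bCov μ lam a x j))
      = ((1 + μ * nsq x) * μ)
        * ((∑ i, x i * bCov μ lam a x i) * (∑ j, x j * bCov μ lam a x j)) := by
    rw [Finset.sum_mul_sum, Finset.mul_sum]
    exact Finset.sum_congr rfl fun i _ => by rw [Finset.mul_sum]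
  rw [hdbl, hTsum, ← Finset.mul_sum, hBsum, div_mul_div_comm, hden]
  field_simp
  ring

/-- for `μ ≤ 0`, `λ² + μ|a|² = 0`, the closing example of the
paper: the length `b` of `β` w.r.t. `α` is given by the stated formula, `β` is
conformal (`r_{ij} = c·a_{ij}`), and the conformal factor satisfies
`c² = -μ b²`. -/
theorem stmt18 {n : ℕ} (μ lam : ℝ) (hμ : μ ≤ 0) (a : Fin n → ℝ)
    (hla : lam ^ 2 + μ * nsq a = 0) :
    ∃ c : (Fin n → ℝ) → ℝ, ∀ x : Fin n → ℝ, 0 < 1 + μ * nsq x →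
      (bNormSq μ lam a x =
        (lam ^ 2 * nsq x + 2 * lam * ipr a x + (1 + μ * nsq x) * nsq a -
          μ * ipr a x ^ 2) / (1 + μ * nsq x)) ∧
      (∀ i j, rTensor μ lam a x i j = c x * aMat μ x i j) ∧
      (c x) ^ 2 = -μ * bNormSq μ lam a x := by
  refine ⟨fun x => (lam - μ * ipr a x) / Real.sqrt (1 + μ * nsq x), fun x hs =>
    ⟨bNormSq_eq μ lam a x hs, fun i j => rTensor_eq μ lam a x hs i j, ?_⟩⟩
  rw [bNormSq_eq μ lam a x hs, div_pow, Real.sq_sqrt hs.le]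
  field_simp
  linear_combination (1 + μ * nsq x) * hla


end
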